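/- Let x ≥ 2 be an integer and let m be an integer with 4x² − x ≤ m ≤ 4x² + 3x − 3. Then the pseudoachromatic index of the complete graph K_m satisfies ψ(m) ≤ 2x(m−x−1); equivalently, there is no complete edge-colouring of K_m with 2x(m−x−1)+1 colours. -/

import Mathlib

set_option maxHeartbeats 1000000

/-- A complete edge-colouring of the complete graph `K_m` with `k` colours:
every colour appears on some edge, and every two distinct colours appear
on two edges sharing a common vertex. -/
def IsCompleteEdgeColouring {m k : ℕ} (Γ : Sym2 (Fin m) → Fin k) : Prop :=
  (∀ c : Fin k, ∃ x y : Fin m, x ≠ y ∧ Γ s(x, y) = c) ∧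
  (∀ c₁ c₂ : Fin k, c₁ ≠ c₂ →
    ∃ x y z : Fin m, x ≠ y ∧ x ≠ z ∧ Γ s(x, y) = c₁ ∧ Γ s(x, z) = c₂)

/-- The pseudoachromatic index of the complete graph `K_m`: the largest number of
colours in a complete edge-colouring of `K_m`. -/
noncomputable def pseudoachromaticIndex (m : ℕ) : ℕ :=
  sSup {k : ℕ | ∃ Γ : Sym2 (Fin m) → Fin k, IsCompleteEdgeColouring Γ}

open Finset
open scoped Classical

lemma two_mul_choose_two (n : ℕ) : 2 * n.choose 2 = n * (n - 1) := by
  induction n with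
  | zero => simp
  | succ n ih =>
    rw [Nat.choose_succ_succ, Nat.choose_one_right, Nat.mul_add, ih]
    rcases n with _ | n
    · simp
    · simp only [Nat.succ_sub_one]
      ring

noncomputable section PA
variable {m k : ℕ} (Γ : Sym2 (Fin m) → Fin k)

def paE (m : ℕ) : Finset (Sym2 (Fin m)) := univ.filter (fun e => ¬ e.IsDiag)
def paEc (c : Fin k) : Finset (Sym2 (Fin m)) := (paE m).filter (fun e => Γ e = c)
def paT (c : Fin k) : ℕ := (paEc Γ c).card
def paV (c : Fin k) : Finset (Fin m) := univ.filter (fun v => ∃ e ∈ paEc Γ c, v ∈ e)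
def paI (c : Fin k) : Finset (Sym2 (Fin m)) := (paE m).filter (fun e => ∃ v ∈ paV Γ c, v ∈ e)
def paA (c : Fin k) : Finset (Sym2 (Fin m)) := (paI Γ c).filter (fun e => ¬ Γ e = c)

lemma paE_card : (paE m).card = m.choose 2 := by
  have h := Sym2.card_subtype_not_diag (α := Fin m)
  rw [Fintype.card_subtype] at h
  simpa [paE] using h

lemma sum_paT : (∑ c : Fin k, paT Γ c) = m.choose 2 := by
  rw [← paE_card (m := m)]
  exact (Finset.card_eq_sum_card_fiberwise (f := Γ) (s := paE m) (t := univ)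
    (fun a _ => mem_univ _)).symm

lemma sym2_exists_mem (e : Sym2 (Fin m)) : ∃ a, a ∈ e := by
  induction e using Sym2.ind with
  | _ a b => exact ⟨a, Sym2.mem_mk_left a b⟩

lemma paEc_subset_paI (c : Fin k) : paEc Γ c ⊆ paI Γ c := by
  intro e he
  obtain ⟨v, hv⟩ := sym2_exists_mem e
  have hvV : v ∈ paV Γ c := by
    simp only [paV, mem_filter, mem_univ, true_and]
    exact ⟨e, he, hv⟩
  simp only [paI, mem_filter]
  exact ⟨(mem_filter.mp he).1, v, hvV, hv⟩

lemma paV_card_le (c : Fin k) : (paV Γ c).card ≤ 2 * paT Γ c := by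
  have hsub : paV Γ c ⊆ (paEc Γ c).biUnion (fun e => univ.filter (· ∈ e)) := by
    intro v hv
    simp only [paV, mem_filter, mem_univ, true_and] at hv
    obtain ⟨e, he, hve⟩ := hv
    exact mem_biUnion.mpr ⟨e, he, by simp [hve]⟩
  calc (paV Γ c).card ≤ _ := card_le_card hsub
    _ ≤ ∑ e ∈ paEc Γ c, (univ.filter (· ∈ e)).card := card_biUnion_le
    _ ≤ ∑ _e ∈ paEc Γ c, 2 := by
        refine sum_le_sum (fun e _ => ?_)
        induction e using Sym2.ind with
        | _ a b =>
          refine le_trans (card_le_card (fun v hv => ?_)) (card_insert_le a {b} |>.trans (by simp))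
          simp only [mem_filter, mem_univ, true_and, Sym2.mem_iff] at hv
          simp [hv]
    _ = 2 * paT Γ c := by rw [sum_const, smul_eq_mul, mul_comm]; rfl

lemma paI_card (c : Fin k) :
    (paI Γ c).card + (m - (paV Γ c).card).choose 2 = m.choose 2 := by
  have hsplit := Finset.card_filter_add_card_filter_not
    (s := paE m) (p := fun e => ∃ v ∈ paV Γ c, v ∈ e)
  have hneg : (paE m).filter (fun e => ¬ ∃ v ∈ paV Γ c, v ∈ e)
      = ((univ \ paV Γ c).offDiag.image Sym2.mk.uncurry) := by
    ext e
    induction e using Sym2.ind with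
    | _ a b =>
      simp only [mem_filter, mem_image, Finset.mem_offDiag, mem_sdiff, mem_univ, true_and,
        paE, not_exists]
      constructor
      · rintro ⟨hnd, hav⟩
        refine ⟨(a, b), ⟨fun h => hav a ⟨h, Sym2.mem_mk_left a b⟩,
          fun h => hav b ⟨h, Sym2.mem_mk_right a b⟩, ?_⟩, rfl⟩
        intro h; exact hnd (by simp; exact h)
      · rintro ⟨⟨p, q⟩, ⟨hp, hq, hpq⟩, hmk⟩
        simp only at hp hq hpq
        simp only [Function.uncurry_apply_pair] at hmk
        have heq := Sym2.eq_iff.mp hmk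
        constructor
        · intro hd
          have : a = b := by simpa [Sym2.mk_isDiag_iff] using hd
          rcases heq with ⟨rfl, rfl⟩ | ⟨rfl, rfl⟩ <;> exact hpq (by omega)
        · rintro v ⟨hv, hve⟩
          rcases heq with ⟨rfl, rfl⟩ | ⟨rfl, rfl⟩ <;>
            (rcases Sym2.mem_iff.mp hve with rfl | rfl) <;> first | exact hp hv | exact hq hv
  rw [hneg] at hsplit
  rw [Sym2.card_image_offDiag, paE_card] at hsplit
  have : (univ \ paV Γ c).card = m - (paV Γ c).card := by
    rw [card_sdiff_of_subset (subset_univ _), card_univ, Fintype.card_fin]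
  rw [this] at hsplit
  simpa [paI] using hsplit

lemma mk_mem_paEc {a b : Fin m} {c : Fin k} (hab : a ≠ b) (hc : Γ s(a, b) = c) :
    s(a, b) ∈ paEc Γ c := by
  simp only [paEc, paE, mem_filter, mem_univ, true_and]
  exact ⟨by simp [Sym2.mk_isDiag_iff]; exact hab, hc⟩

lemma mem_paV_of_edge {a : Fin m} {c : Fin k} {e : Sym2 (Fin m)} (he : e ∈ paEc Γ c)
    (ha : a ∈ e) : a ∈ paV Γ c := by
  simp only [paV, mem_filter, mem_univ, true_and]
  exact ⟨e, he, ha⟩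

lemma paT_pos (hΓ : IsCompleteEdgeColouring Γ) (c : Fin k) : 1 ≤ paT Γ c := by
  obtain ⟨a, b, hab, hc⟩ := hΓ.1 c
  exact card_pos.mpr ⟨s(a, b), mk_mem_paEc Γ hab hc⟩

lemma exists_paA_edge (hΓ : IsCompleteEdgeColouring Γ) {c c' : Fin k} (h : c' ≠ c) :
    ∃ e ∈ paA Γ c, Γ e = c' := by
  obtain ⟨p, y, z, hpy, hpz, hc, hc'⟩ := hΓ.2 c c' (Ne.symm h)
  have hpV : p ∈ paV Γ c := mem_paV_of_edge Γ (mk_mem_paEc Γ hpy hc) (Sym2.mem_mk_left p y)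
  refine ⟨s(p, z), ?_, hc'⟩
  simp only [paA, paI, paE, mem_filter, mem_univ, true_and]
  refine ⟨⟨by simp [Sym2.mk_isDiag_iff]; exact hpz, p, hpV, Sym2.mem_mk_left p z⟩, ?_⟩
  rw [hc']; exact h

lemma paA_card (c : Fin k) : (paI Γ c).card = paT Γ c + (paA Γ c).card := by
  have hsplit := Finset.card_filter_add_card_filter_not
    (s := paI Γ c) (p := fun e => Γ e = c)
  have h1 : (paI Γ c).filter (fun e => Γ e = c) = paEc Γ c := by
    ext e
    simp only [mem_filter, paI, paEc]
    constructor
    · rintro ⟨⟨he, _⟩, hc⟩; exact ⟨he, hc⟩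
    · rintro ⟨he, hc⟩
      have hmem : e ∈ paI Γ c := (paEc_subset_paI Γ c) (by simp [paEc, mem_filter, he, hc])
      simp only [paI, mem_filter] at hmem
      exact ⟨hmem, hc⟩
  rw [h1] at hsplit
  rw [← hsplit]; rfl

lemma main_ineq (hΓ : IsCompleteEdgeColouring Γ) (hm : 0 < m) (c : Fin k) :
    (k - 1) + paT Γ c ≤ (paI Γ c).card := by
  have hA : k - 1 ≤ (paA Γ c).card := by
    have hjunk : Nonempty (Sym2 (Fin m)) := ⟨s(⟨0, hm⟩, ⟨0, hm⟩)⟩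
    set f : Fin k → Sym2 (Fin m) := fun c' =>
      if h : c' ≠ c then (exists_paA_edge Γ hΓ h).choose else Classical.arbitrary _ with hf
    have hfc : ∀ c' (h : c' ≠ c), f c' ∈ paA Γ c ∧ Γ (f c') = c' := by
      intro c' h
      have hs := (exists_paA_edge Γ hΓ h).choose_spec
      rw [hf]; simp only [dif_pos h]; exact hs
    have hcard : (univ.erase c).card = k - 1 := by
      rw [card_erase_of_mem (mem_univ c), card_univ, Fintype.card_fin]
    rw [← hcard]
    refine card_le_card_of_injOn f (fun c' hc' => (hfc c' (mem_erase.mp hc').1).1) ?_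
    intro c₁ h₁ c₂ h₂ heq
    have e₁ := (hfc c₁ (mem_erase.mp h₁).1).2
    have e₂ := (hfc c₂ (mem_erase.mp h₂).1).2
    rw [← e₁, ← e₂, heq]
  calc (k - 1) + paT Γ c ≤ (paA Γ c).card + paT Γ c := by omega
    _ = (paI Γ c).card := by rw [paA_card]; omega


lemma ar1 (x e t : ℕ) (hx : 2 ≤ x) (he : 4*x^2 ≤ 2*x + 1 + e) (ht1 : 1 ≤ t)
    (htx : t + 1 ≤ x) (v : ℕ) (hv : x + 1 + e = 2*t + (v+1))
    (hineq : 2*(2*x*e) + 2*t + (v+1)*v ≤ (x+1+e)*(x+e)) : False := by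
  zify at *
  have h1 : (0:ℤ) ≤ (x:ℤ) - 1 - t := by linarith
  have h2 : (0:ℤ) ≤ (e:ℤ) + 1 - t := by nlinarith
  nlinarith [mul_nonneg h1 h2]

lemma ar2 (x e w : ℕ) (hx : 2 ≤ x) (he : 4*x^2 ≤ 2*x + 1 + e)
    (hw : x + 1 + e + 1 = 2*x + (w+1))
    (hineq : 2*(2*x*e) + 2*x + (w+1)*w ≤ (x+1+e)*(x+e)) : False := by
  zify at *
  nlinarith

lemma ar_id (x w : ℕ) : 2*(2*x*(x+w)) + 2*x + (w+1)*w = (x+1+(x+w))*(x+(x+w)) := by ring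

lemma ar3 (x e τ : ℕ) (hx : 2 ≤ x) (helo : 4*x^2 ≤ 2*x+1+e) (hehi : x + e + 4 ≤ 4*x^2 + 3*x)
    (hineq : 2*((x+1)*(2*x*e+1)) ≤ (x+1+e)*(x+e) + 2*τ) : 4*x^2 + 2 ≤ τ + 2*x := by
  zify at *
  have h1 : (0:ℤ) ≤ (e:ℤ) - (4*x^2 - 2*x - 1) := by linarith
  have h2 : (0:ℤ) ≤ (4*(x:ℤ)^2 + 2*x - 4) - e := by linarith
  have h3 : (0:ℤ) ≤ 4*(x:ℤ)^2 - 2*x - 4 := by nlinarith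
  nlinarith [mul_nonneg h1 h2, mul_nonneg h3 h2, mul_nonneg (by linarith : (0:ℤ) ≤ (x:ℤ) - 2) (by positivity : (0:ℤ) ≤ (x:ℤ))]

lemma ar4 (x τ m w : ℕ) (hx : 2 ≤ x) (hτ : 4*x^2 + 2 ≤ τ + 2*x)
    (hm2 : m + 3 ≤ 4*x^2 + 3*x) (hw : w + 1 = 2*x) (hcard : τ * w ≤ m) : False := by
  zify at *
  have h1 : (0:ℤ) ≤ (τ:ℤ) - (4*x^2 - 2*x + 2) := by linarith
  have h2 : (0:ℤ) ≤ (w:ℤ) := by linarith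
  nlinarith [mul_nonneg h1 h2, mul_nonneg (by linarith : (0:ℤ) ≤ (x:ℤ) - 2) (by positivity : (0:ℤ) ≤ (x:ℤ)*(x:ℤ))]


lemma no_colouring (x m : ℕ) (hx : 2 ≤ x)
    (h1 : 4 * x ^ 2 - x ≤ m) (h2 : m ≤ 4 * x ^ 2 + 3 * x - 3)
    (Γ : Sym2 (Fin m) → Fin (2 * x * (m - x - 1) + 1))
    (hΓ : IsCompleteEdgeColouring Γ) : False := by
  have hx4 : x ≤ 4 * x ^ 2 := by nlinarith
  have h1' : 4 * x ^ 2 ≤ m + x := Nat.sub_le_iff_le_add.mp h1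
  have h3 : 3 ≤ 4 * x ^ 2 + 3 * x := by nlinarith
  have h2' : m + 3 ≤ 4 * x ^ 2 + 3 * x := (Nat.le_sub_iff_add_le h3).mp h2
  have hm2 : x + 2 ≤ m := by nlinarith
  have hm0 : 0 < m := by omega
  obtain ⟨e, hme⟩ : ∃ e, m = x + 1 + e := ⟨m - x - 1, by omega⟩
  have hedef : m - x - 1 = e := by omega
  have helo : 4 * x ^ 2 ≤ 2 * x + 1 + e := by omega
  have hehi : x + e + 4 ≤ 4 * x ^ 2 + 3 * x := by omega
  have hm1 : m - 1 = x + e := by omega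
  have hxe : x ≤ e := by nlinarith
  have hm3 : 3 * x ≤ m := by nlinarith
  have hmm : 2 * (m.choose 2) = (x + 1 + e) * (x + e) := by
    rw [two_mul_choose_two, hm1, ← hme]
  have hK1 : (2 * x * (m - x - 1) + 1) - 1 = 2 * x * e := by
    rw [hedef, Nat.add_sub_cancel]
  -- Step A : every colour class has at least x edges
  have htx : ∀ c, x ≤ paT Γ c := by
    intro c
    by_contra hcon
    push_neg at hcon
    have htx' : paT Γ c + 1 ≤ x := hcon
    have ht1 : 1 ≤ paT Γ c := paT_pos Γ hΓ c
    have hMI := main_ineq Γ hΓ hm0 c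
    rw [hK1] at hMI
    have hIc := paI_card Γ c
    have hs : (paV Γ c).card ≤ 2 * paT Γ c := paV_card_le Γ c
    set t := paT Γ c
    set s := (paV Γ c).card
    have hmono : (m - 2 * t).choose 2 ≤ (m - s).choose 2 :=
      Nat.choose_le_choose 2 (by omega)
    have hineq : 2 * x * e + t + (m - 2 * t).choose 2 ≤ m.choose 2 := by omega
    have hineq2 : 2 * (2 * x * e) + 2 * t + 2 * ((m - 2 * t).choose 2) ≤ 2 * (m.choose 2) := by
      omega
    rw [two_mul_choose_two] at hineq2
    have h2t : 2 * t + 2 ≤ m := by omega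
    obtain ⟨v, hv1⟩ : ∃ v, m - 2 * t = v + 1 := ⟨m - 2 * t - 1, by omega⟩
    rw [hv1, Nat.add_sub_cancel, hmm] at hineq2
    exact ar1 x e t hx helo ht1 htx' v (by omega) hineq2
  -- Step B : tight classes span exactly 2x vertices
  have hsx : ∀ c, paT Γ c = x → (paV Γ c).card = 2 * x := by
    intro c htc
    have hs : (paV Γ c).card ≤ 2 * paT Γ c := paV_card_le Γ c
    rw [htc] at hs
    refine le_antisymm hs ?_
    by_contra hcon
    push_neg at hcon
    have hscon : (paV Γ c).card + 1 ≤ 2 * x := hcon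
    have hMI := main_ineq Γ hΓ hm0 c
    rw [hK1, htc] at hMI
    have hIc := paI_card Γ c
    set s := (paV Γ c).card
    obtain ⟨w, hw⟩ : ∃ w, x + 1 + e + 1 = 2 * x + (w + 1) := ⟨m - 2 * x, by omega⟩
    have hmono : (w + 1).choose 2 ≤ (m - s).choose 2 :=
      Nat.choose_le_choose 2 (by omega)
    have hineq2 : 2 * (2 * x * e) + 2 * x + 2 * ((w + 1).choose 2) ≤ 2 * (m.choose 2) := by
      omega
    rw [two_mul_choose_two, Nat.add_sub_cancel, hmm] at hineq2
    exact ar2 x e w hx helo hw hineq2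
  -- Step C : for tight classes, the A-set has exactly 2xe elements
  have hAcard : ∀ c, paT Γ c = x → (paA Γ c).card = 2 * x * e := by
    intro c htc
    have hIA := paA_card Γ c
    have hIc := paI_card Γ c
    rw [htc] at hIA
    rw [hsx c htc] at hIc
    obtain ⟨w, hew⟩ : ∃ w, e = x + w := ⟨e - x, by omega⟩
    have hd1 : m - 2 * x = w + 1 := by omega
    have hid := ar_id x w
    rw [← hew] at hid
    have hid2 : 2 * (2 * x * e) + 2 * x + (w + 1) * w = 2 * (m.choose 2) := by
      rw [hmm]; exact hid
    have hch : 2 * ((m - 2 * x).choose 2) = (w + 1) * w := by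
      rw [two_mul_choose_two, hd1, Nat.add_sub_cancel]
    omega
  -- Step D : for tight classes, colours are injective on the A-set
  have hinj : ∀ c, paT Γ c = x → ∀ e₁ ∈ paA Γ c, ∀ e₂ ∈ paA Γ c, Γ e₁ = Γ e₂ → e₁ = e₂ := by
    intro c htc
    have hsurj : ∀ b ∈ univ.erase c, ∃ a ha, (fun (e : Sym2 (Fin m)) (_ : e ∈ paA Γ c) => Γ e) a ha = b := by
      intro b hb
      obtain ⟨ed, hed, hced⟩ := exists_paA_edge Γ hΓ (mem_erase.mp hb).1
      exact ⟨ed, hed, hced⟩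
    have hcard : (paA Γ c).card ≤ (univ.erase c).card := by
      rw [card_erase_of_mem (mem_univ c), card_univ, Fintype.card_fin, hAcard c htc, hK1]
    intro e₁ he₁ e₂ he₂ heq
    exact Finset.inj_on_of_surj_on_of_card_le (t := univ.erase c)
      (fun e _ => Γ e)
      (fun a ha => mem_erase.mpr ⟨(mem_filter.mp ha).2, mem_univ _⟩)
      hsurj hcard he₁ he₂ heq
  -- intersections of colour vertex sets are nonempty
  have hVne : ∀ c c' : Fin (2 * x * (m - x - 1) + 1), c ≠ c' →
      ∃ p, p ∈ paV Γ c ∧ p ∈ paV Γ c' := by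
    intro c c' hne
    obtain ⟨p, y, z, hpy, hpz, hc, hc'⟩ := hΓ.2 c c' hne
    exact ⟨p, mem_paV_of_edge Γ (mk_mem_paEc Γ hpy hc) (Sym2.mem_mk_left p y),
      mem_paV_of_edge Γ (mk_mem_paEc Γ hpz hc') (Sym2.mem_mk_left p z)⟩
  -- Step E : two tight classes share exactly one vertex
  have hVint : ∀ c c' : Fin (2 * x * (m - x - 1) + 1), c ≠ c' →
      paT Γ c = x → paT Γ c' = x →
      ∀ u v : Fin m, u ∈ paV Γ c → u ∈ paV Γ c' → v ∈ paV Γ c → v ∈ paV Γ c' → u = v := by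
    intro c c' hne htc htc' u v huc huc' hvc hvc'
    by_contra huv
    have key : ∀ d d' : Fin (2 * x * (m - x - 1) + 1), d ≠ d' → paT Γ d = x →
        u ∈ paV Γ d → v ∈ paV Γ d → u ∈ paV Γ d' → v ∈ paV Γ d' → Γ s(u, v) = d' := by
      intro d d' hdd htd hud hvd hud' hvd'
      obtain ⟨eu, heu, hueu⟩ : ∃ ee ∈ paEc Γ d', u ∈ ee := by
        have := mem_filter.mp hud'
        simpa using this.2
      obtain ⟨ev, hev, hvev⟩ : ∃ ee ∈ paEc Γ d', v ∈ ee := by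
        have := mem_filter.mp hvd'
        simpa using this.2
      have heuA : eu ∈ paA Γ d := by
        simp only [paA, paI, mem_filter]
        have heuE := (mem_filter.mp heu).1
        have hgeu := (mem_filter.mp heu).2
        exact ⟨⟨heuE, u, hud, hueu⟩, by rw [hgeu]; exact Ne.symm hdd⟩
      have hevA : ev ∈ paA Γ d := by
        simp only [paA, paI, mem_filter]
        have hevE := (mem_filter.mp hev).1
        have hgev := (mem_filter.mp hev).2
        exact ⟨⟨hevE, v, hvd, hvev⟩, by rw [hgev]; exact Ne.symm hdd⟩
      have heqc : Γ eu = Γ ev := by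
        rw [(mem_filter.mp heu).2, (mem_filter.mp hev).2]
      have hee : eu = ev := hinj d htd eu heuA ev hevA heqc
      have huv_mem : u ∈ ev ∧ v ∈ ev := ⟨hee ▸ hueu, hvev⟩
      have : ev = s(u, v) := (Sym2.mem_and_mem_iff huv).mp huv_mem
      rw [← this]
      exact (mem_filter.mp hev).2
    have hc' : Γ s(u, v) = c' := key c c' hne htc huc hvc huc' hvc'
    have hc : Γ s(u, v) = c := key c' c (Ne.symm hne) htc' huc' hvc' huc hvc
    exact hne (by rw [← hc, ← hc'])
  -- Step G : many tight classes
  set F := univ.filter (fun c => paT Γ c = x) with hFdef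
  have hFtight : ∀ c ∈ F, paT Γ c = x := fun c hc => (mem_filter.mp hc).2
  have hsum := sum_paT Γ
  have hτ : 4 * x ^ 2 + 2 ≤ F.card + 2 * x := by
    have hptw : ∀ c ∈ (univ : Finset (Fin (2 * x * (m - x - 1) + 1))),
        x + 1 ≤ paT Γ c + (if paT Γ c = x then 1 else 0) := by
      intro c _
      by_cases h : paT Γ c = x
      · simp [h]
      · have := htx c
        simp only [h, if_false]
        omega
    have hsum2 : (2 * x * e + 1) * (x + 1) ≤ m.choose 2 + F.card := by
      calc (2 * x * e + 1) * (x + 1)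
          = ∑ _c : Fin (2 * x * (m - x - 1) + 1), (x + 1) := by
            rw [sum_const, card_univ, Fintype.card_fin, smul_eq_mul, hedef]
        _ ≤ ∑ c : Fin (2 * x * (m - x - 1) + 1),
              (paT Γ c + (if paT Γ c = x then 1 else 0)) := sum_le_sum hptw
        _ = (∑ c, paT Γ c) + ∑ c, (if paT Γ c = x then 1 else 0) := sum_add_distrib
        _ = m.choose 2 + F.card := by
            rw [hsum, Finset.sum_boole]
            simp [hFdef]
    have hsum3 : 2 * ((x + 1) * (2 * x * e + 1)) ≤ (x + 1 + e) * (x + e) + 2 * F.card := by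
      nlinarith [hsum2, hmm]
    exact ar3 x e F.card hx helo hehi hsum3
  -- Step H/I : pigeonhole to find a popular vertex p
  have hτ1 : 1 ≤ F.card := by nlinarith [hτ]
  obtain ⟨c₀, hc₀F⟩ := Finset.card_pos.mp hτ1
  have htc₀ : paT Γ c₀ = x := hFtight c₀ hc₀F
  set pt : Fin (2 * x * (m - x - 1) + 1) → Fin m := fun c' =>
    if h : c₀ = c' then ⟨0, hm0⟩ else (hVne c₀ c' h).choose with hptdef
  have hpt : ∀ c', c₀ ≠ c' → pt c' ∈ paV Γ c₀ ∧ pt c' ∈ paV Γ c' := by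
    intro c' h
    have hspec := (hVne c₀ c' h).choose_spec
    rw [hptdef]
    simp only [dif_neg h]
    exact hspec
  set w := 2 * x - 1 with hwdef
  have hw : w + 1 = 2 * x := by omega
  have hmaps : ∀ c' ∈ F.erase c₀, pt c' ∈ paV Γ c₀ := by
    intro c' hc'
    exact (hpt c' (Ne.symm (mem_erase.mp hc').1)).1
  have hcard1 : (paV Γ c₀).card * w < (F.erase c₀).card := by
    rw [hsx c₀ htc₀, card_erase_of_mem hc₀F]
    have hxw : 2 * x * w + 2 * x = 4 * x ^ 2 := by
      calc 2 * x * w + 2 * x = 2 * x * (w + 1) := by ring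
        _ = 2 * x * (2 * x) := by rw [hw]
        _ = 4 * x ^ 2 := by ring
    have h5 : 2 * x * w + 2 ≤ F.card := by linarith
    omega
  obtain ⟨p, hpV₀, hfib⟩ :=
    Finset.exists_lt_card_fiber_of_mul_lt_card_of_maps_to hmaps hcard1
  set G := (F.erase c₀).filter (fun c' => pt c' = p) with hGdef
  have hGcard : w + 1 ≤ G.card := hfib
  have hG : ∀ c' ∈ G, p ∈ paV Γ c' ∧ c' ∈ F ∧ c' ≠ c₀ := by
    intro c' hc'
    have h1g := mem_filter.mp hc'
    have h2g := mem_erase.mp h1g.1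
    refine ⟨?_, h2g.2, h2g.1⟩
    have := (hpt c' (Ne.symm h2g.1)).2
    rwa [h1g.2] at this
  have hc₀G : c₀ ∉ G := by
    intro h
    exact (hG c₀ h).2.2 rfl
  set G' := insert c₀ G with hG'def
  have hG'card : w + 2 ≤ G'.card := by
    rw [hG'def, card_insert_of_notMem hc₀G]
    omega
  have hG' : ∀ c' ∈ G', p ∈ paV Γ c' ∧ c' ∈ F := by
    intro c' hc'
    rcases mem_insert.mp hc' with rfl | h
    · exact ⟨hpV₀, hc₀F⟩
    · exact ⟨(hG c' h).1, (hG c' h).2.1⟩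
  -- Step J : every tight class contains p
  have hall : ∀ c'' ∈ F, p ∈ paV Γ c'' := by
    intro c'' hc''F
    by_contra hp
    have hne'' : ∀ c' ∈ G', c' ≠ c'' := by
      intro c' h heq
      exact hp (heq ▸ (hG' c' h).1)
    set q : Fin (2 * x * (m - x - 1) + 1) → Fin m := fun c' =>
      if h : c'' = c' then ⟨0, hm0⟩ else (hVne c'' c' h).choose with hqdef
    have hq : ∀ c', c'' ≠ c' → q c' ∈ paV Γ c'' ∧ q c' ∈ paV Γ c' := by
      intro c' h
      have hspec := (hVne c'' c' h).choose_spec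
      rw [hqdef]
      simp only [dif_neg h]
      exact hspec
    have hinjq : (G').card ≤ (paV Γ c'').card := by
      refine card_le_card_of_injOn q
        (fun c' hc' => (hq c' (Ne.symm (hne'' c' hc'))).1) ?_
      intro c₁ h₁ c₂ h₂ heq
      by_contra hne12
      have h₁' := hG' c₁ h₁
      have h₂' := hG' c₂ h₂
      have hq1 := hq c₁ (Ne.symm (hne'' c₁ h₁))
      have hq2 := hq c₂ (Ne.symm (hne'' c₂ h₂))
      have : q c₁ = p := hVint c₁ c₂ hne12 (hFtight c₁ h₁'.2) (hFtight c₂ h₂'.2)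
        (q c₁) p hq1.2 (heq ▸ hq2.2) h₁'.1 h₂'.1
      exact hp (this ▸ hq1.1)
    rw [hsx c'' (hFtight c'' hc''F)] at hinjq
    omega
  -- Step K : the punctured vertex sets are pairwise disjoint
  set W : Fin (2 * x * (m - x - 1) + 1) → Finset (Fin m) :=
    fun c => (paV Γ c).erase p with hWdef
  have hWcard : ∀ c ∈ F, (W c).card = w := by
    intro c hc
    show ((paV Γ c).erase p).card = w
    rw [card_erase_of_mem (hall c hc), hsx c (hFtight c hc)]
  have hWdisj : ∀ c ∈ F, ∀ c' ∈ F, c ≠ c' → Disjoint (W c) (W c') := by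
    intro c hc c' hc' hne
    rw [Finset.disjoint_left]
    intro v hv hv'
    have h1w := mem_erase.mp hv
    have h2w := mem_erase.mp hv'
    exact h1w.1 (hVint c c' hne (hFtight c hc) (hFtight c' hc') v p h1w.2 h2w.2
      (hall c hc) (hall c' hc'))
  have hbiU : F.card * w ≤ m := by
    calc F.card * w = ∑ c ∈ F, (W c).card := by
          rw [Finset.sum_congr rfl hWcard, sum_const, smul_eq_mul]
      _ = (F.biUnion W).card := (Finset.card_biUnion hWdisj).symm
      _ ≤ (univ : Finset (Fin m)).card := card_le_card (subset_univ _)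
      _ = m := by rw [card_univ, Fintype.card_fin]
  exact ar4 x F.card m w hx hτ h2' hw hbiU

end PA


theorem stmt_1 (x m : ℕ) (hx : 2 ≤ x)
    (h1 : 4 * x ^ 2 - x ≤ m) (h2 : m ≤ 4 * x ^ 2 + 3 * x - 3) :
    pseudoachromaticIndex m ≤ 2 * x * (m - x - 1) ∧
    ¬ ∃ Γ : Sym2 (Fin m) → Fin (2 * x * (m - x - 1) + 1), IsCompleteEdgeColouring Γ := by
  have hmain : ¬ ∃ Γ : Sym2 (Fin m) → Fin (2 * x * (m - x - 1) + 1),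
      IsCompleteEdgeColouring Γ := by
    rintro ⟨Γ, hΓ⟩
    exact no_colouring x m hx h1 h2 Γ hΓ
  refine ⟨?_, hmain⟩
  apply csSup_le'
  rintro k ⟨Γ, hΓ⟩
  by_contra hk
  push_neg at hk
  have hKk : 2 * x * (m - x - 1) + 1 ≤ k := hk
  apply hmain
  refine ⟨fun e => ⟨min (Γ e) (2 * x * (m - x - 1)), by omega⟩, ?_, ?_⟩
  · intro c
    have hc : (c : ℕ) < k := by omega
    obtain ⟨a, b, hab, hΓab⟩ := hΓ.1 ⟨c, hc⟩
    refine ⟨a, b, hab, ?_⟩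
    apply Fin.ext
    simp only [hΓab]
    have : (c : ℕ) ≤ 2 * x * (m - x - 1) := by omega
    simpa using this
  · intro c₁ c₂ hne
    have h₁ : (c₁ : ℕ) < k := by omega
    have h₂ : (c₂ : ℕ) < k := by omega
    have hne' : (⟨(c₁ : ℕ), h₁⟩ : Fin k) ≠ ⟨(c₂ : ℕ), h₂⟩ := by
      intro h
      have hv : (c₁ : ℕ) = (c₂ : ℕ) := Fin.mk_eq_mk.mp h
      exact hne (Fin.ext hv)
    obtain ⟨p, y, z, hpy, hpz, e1, e2⟩ := hΓ.2 ⟨c₁, h₁⟩ ⟨c₂, h₂⟩ hne'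
    refine ⟨p, y, z, hpy, hpz, ?_, ?_⟩ <;> apply Fin.ext
    · simp only [e1]
      have : (c₁ : ℕ) ≤ 2 * x * (m - x - 1) := by omega
      simpa using this
    · simp only [e2]
      have : (c₂ : ℕ) ≤ 2 * x * (m - x - 1) := by omega
      simpa using this
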